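/- Assume the p=3 parasupersymmetry algebra, with Q₁ = (Q† + Q)/(2√3) and Q₂ = (Q† − Q)/(2√3·i). Let Ψ ≠ 0 satisfy Q₁Ψ = q₁Ψ and HΨ = EΨ (q₁, E ∈ ℝ, using that Q₁ and H are self-adjoint). If (q₁²·I − Q₂²)Ψ ≠ 0, then E ≥ 0. -/

import Mathlib

open ContinuousLinearMap

/-- The hermitian parasupercharge `Q₁ = (Q† + Q)/(2√3)`. -/
noncomputable def hermQ1 {𝓗 : Type*} [NormedAddCommGroup 𝓗] [InnerProductSpace ℂ 𝓗]
    [CompleteSpace 𝓗] (Q : 𝓗 →L[ℂ] 𝓗) : 𝓗 →L[ℂ] 𝓗 :=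
  ((2 * Real.sqrt 3 : ℝ) : ℂ)⁻¹ • (adjoint Q + Q)

/-- The hermitian parasupercharge `Q₂ = (Q† − Q)/(2√3·i)`. -/
noncomputable def hermQ2 {𝓗 : Type*} [NormedAddCommGroup 𝓗] [InnerProductSpace ℂ 𝓗]
    [CompleteSpace 𝓗] (Q : 𝓗 →L[ℂ] 𝓗) : 𝓗 →L[ℂ] 𝓗 :=
  (((2 * Real.sqrt 3 : ℝ) : ℂ) * Complex.I)⁻¹ • (adjoint Q - Q)

set_option maxHeartbeats 1000000 in
/-- Assuming the p=3 parasupersymmetry algebra, if `Ψ ≠ 0` satisfies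
`Q₁Ψ = q₁Ψ` and `HΨ = EΨ`, and `(q₁²·I − Q₂²)Ψ ≠ 0`, then `E ≥ 0`. -/
theorem stmt11 {𝓗 : Type*} [NormedAddCommGroup 𝓗] [InnerProductSpace ℂ 𝓗] [CompleteSpace 𝓗]
    (Q H : 𝓗 →L[ℂ] 𝓗) (hH : IsSelfAdjoint H)
    (hQH : Q * H = H * Q) (hQdH : adjoint Q * H = H * adjoint Q)
    (hii : Q ^ 3 * adjoint Q + Q ^ 2 * adjoint Q * Q + Q * adjoint Q * Q ^ 2
      + adjoint Q * Q ^ 3 = 6 * (Q ^ 2 * H))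
    (hiii : Q * (adjoint Q) ^ 2 * Q = adjoint Q * Q ^ 2 * adjoint Q)
    (hiv : (adjoint Q) ^ 3 * Q + (adjoint Q) ^ 2 * Q * adjoint Q
      + adjoint Q * Q * (adjoint Q) ^ 2 + Q * (adjoint Q) ^ 3 = 6 * ((adjoint Q) ^ 2 * H))
    (hQ4 : Q ^ 4 = 0) (hQd4 : (adjoint Q) ^ 4 = 0)
    (Ψ : 𝓗) (hΨ : Ψ ≠ 0) (q₁ E : ℝ)
    (hq₁ : hermQ1 Q Ψ = (q₁ : ℂ) • Ψ)
    (hE : H Ψ = (E : ℂ) • Ψ)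
    (hker : ((q₁ : ℂ) ^ 2 • (1 : 𝓗 →L[ℂ] 𝓗) - (hermQ2 Q) ^ 2) Ψ ≠ 0) :
    0 ≤ E := by
  simp only [hermQ1, hermQ2] at hq₁ hker
  set sC : ℂ := ((2 * Real.sqrt 3 : ℝ) : ℂ) with hsCdef
  have hsqrt3 : (Real.sqrt 3) ^ 2 = 3 := Real.sq_sqrt (by norm_num)
  have hsC2 : sC ^ 2 = 12 := by
    rw [hsCdef]
    norm_cast
    rw [mul_pow, hsqrt3]; norm_num
  have hsC0 : sC ≠ 0 := by
    intro h
    rw [h] at hsC2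
    norm_num at hsC2
  set X : 𝓗 →L[ℂ] 𝓗 := adjoint Q + Q with hXdef
  set Y : 𝓗 →L[ℂ] 𝓗 := adjoint Q - Q with hYdef
  set P2 : 𝓗 →L[ℂ] 𝓗 := (sC * Complex.I)⁻¹ • Y with hP2def
  set Φ : 𝓗 := ((q₁ : ℂ) ^ 2 • (1 : 𝓗 →L[ℂ] 𝓗) - P2 ^ 2) Ψ with hΦdef
  clear_value sC X Y P2 Φ
  -- basic commutation facts
  have hXH : X * H = H * X := by rw [hXdef, add_mul, mul_add, hQH, hQdH]
  have hYH : Y * H = H * Y := by rw [hYdef, sub_mul, mul_sub, hQH, hQdH]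
  have cHX : Commute H X := hXH.symm
  have cHY : Commute H Y := hYH.symm
  -- scalar facts
  have hsI2 : (sC * Complex.I) ^ 2 = -12 := by
    rw [mul_pow, Complex.I_sq, hsC2]; ring
  have hsI4 : (sC * Complex.I) ^ 4 = 144 := by
    have h4 : (sC * Complex.I) ^ 4 = ((sC * Complex.I) ^ 2) ^ 2 := by ring
    rw [h4, hsI2]; norm_num
  -- eigenvector facts
  have hXΨ : X Ψ = (sC * (q₁ : ℂ)) • Ψ := by
    rw [smul_apply] at hq₁
    calc X Ψ = sC • (sC⁻¹ • X Ψ) := (smul_inv_smul₀ hsC0 _).symm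
      _ = sC • ((q₁ : ℂ) • Ψ) := by rw [hq₁]
      _ = (sC * (q₁ : ℂ)) • Ψ := smul_smul _ _ _
  have hX2Ψ : X (X Ψ) = ((12 : ℂ) * (q₁ : ℂ) ^ 2) • Ψ := by
    calc X (X Ψ) = (sC * (q₁ : ℂ)) • ((sC * (q₁ : ℂ)) • Ψ) := by
          rw [hXΨ, map_smul, hXΨ]
      _ = ((sC * (q₁ : ℂ)) * (sC * (q₁ : ℂ))) • Ψ := smul_smul _ _ _
      _ = ((12 : ℂ) * (q₁ : ℂ) ^ 2) • Ψ := by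
          rw [show (sC * (q₁ : ℂ)) * (sC * (q₁ : ℂ)) = sC ^ 2 * (q₁ : ℂ) ^ 2 by ring, hsC2]
  have hX4Ψ : X (X (X (X Ψ))) = ((144 : ℂ) * (q₁ : ℂ) ^ 4) • Ψ := by
    calc X (X (X (X Ψ))) = X (X (((12 : ℂ) * (q₁ : ℂ) ^ 2) • Ψ)) := by rw [hX2Ψ]
      _ = ((12 : ℂ) * (q₁ : ℂ) ^ 2) • (X (X Ψ)) := by rw [map_smul, map_smul]
      _ = ((12 : ℂ) * (q₁ : ℂ) ^ 2) • (((12 : ℂ) * (q₁ : ℂ) ^ 2) • Ψ) := by rw [hX2Ψ]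
      _ = ((144 : ℂ) * (q₁ : ℂ) ^ 4) • Ψ := by rw [smul_smul]; ring_nf
  -- P2 operator facts
  have hP2sq : P2 ^ 2 = (-12 : ℂ)⁻¹ • Y ^ 2 := by
    rw [hP2def, smul_pow, inv_pow, hsI2]
  have hP2p4 : P2 ^ 4 = (144 : ℂ)⁻¹ • Y ^ 4 := by
    rw [hP2def, smul_pow, inv_pow, hsI4]
  have hpow2 : ∀ (T : 𝓗 →L[ℂ] 𝓗) (v : 𝓗), (T ^ 2) v = T (T v) := by
    intro T v; rw [pow_two, ContinuousLinearMap.mul_apply]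
  have hpow4 : ∀ (T : 𝓗 →L[ℂ] 𝓗) (v : 𝓗), (T ^ 4) v = T (T (T (T v))) := by
    intro T v
    rw [show T ^ 4 = T ^ 3 * T by rw [pow_succ], show T ^ 3 = T ^ 2 * T by rw [pow_succ],
      pow_two, ContinuousLinearMap.mul_apply, ContinuousLinearMap.mul_apply, ContinuousLinearMap.mul_apply]
  have hP2P2Ψ : P2 (P2 Ψ) = (-12 : ℂ)⁻¹ • (Y (Y Ψ)) := by
    rw [← hpow2, hP2sq, smul_apply, hpow2]
  have hP2n4Ψ : P2 (P2 (P2 (P2 Ψ))) = (144 : ℂ)⁻¹ • (Y (Y (Y (Y Ψ)))) := by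
    rw [← hpow4, hP2p4, smul_apply, hpow4]
  have hY4Ψ : Y (Y (Y (Y Ψ))) = (144 : ℂ) • (P2 (P2 (P2 (P2 Ψ)))) := by
    rw [hP2n4Ψ, smul_smul]
    norm_num
  -- Φ basic form
  have hΦval : Φ = (q₁ : ℂ) ^ 2 • Ψ - P2 (P2 Ψ) := by
    rw [hΦdef, sub_apply, smul_apply, ContinuousLinearMap.one_apply, hpow2]
  have hΦX : Φ = (12 : ℂ)⁻¹ • (X (X Ψ) + Y (Y Ψ)) := by
    rw [hΦval, hP2P2Ψ, hX2Ψ]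
    match_scalars <;> ring_nf <;> norm_num
  -- numeral smul conversion
  have cast12 : ∀ T : 𝓗 →L[ℂ] 𝓗, (12 : ℂ) • T = 12 * T := by
    intro T; rw [Algebra.smul_def, map_ofNat]
  have cast2 : ∀ T : 𝓗 →L[ℂ] 𝓗, (2 : ℂ) • T = 2 * T := by
    intro T; rw [Algebra.smul_def, map_ofNat]
  -- core operator identity from (ii) + (iv)
  have core : X ^ 4 - Y ^ 4
      = (12 : ℂ) • (Q ^ 2 * H) + (12 : ℂ) • ((adjoint Q) ^ 2 * H) := by
    have e1 : X ^ 4 - Y ^ 4 =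
        2 * (Q ^ 3 * adjoint Q + Q ^ 2 * adjoint Q * Q + Q * adjoint Q * Q ^ 2
          + adjoint Q * Q ^ 3)
        + 2 * ((adjoint Q) ^ 3 * Q + (adjoint Q) ^ 2 * Q * adjoint Q
          + adjoint Q * Q * (adjoint Q) ^ 2 + Q * (adjoint Q) ^ 3) := by
      rw [hXdef, hYdef]; noncomm_ring
    rw [e1, hii, hiv, cast12, cast12]; noncomm_ring
  have hsum : (X * X + Y * Y) * H
      = (2 : ℂ) • (Q ^ 2 * H) + (2 : ℂ) • ((adjoint Q) ^ 2 * H) := by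
    rw [hXdef, hYdef, cast2, cast2]; noncomm_ring
  -- H commutes through Y∘Y and P2∘P2
  have cHYY : Commute H (Y * Y) := cHY.mul_right cHY
  have cHXX : Commute H (X * X) := cHX.mul_right cHX
  have hHYY : H (Y (Y Ψ)) = (E : ℂ) • (Y (Y Ψ)) := by
    calc H (Y (Y Ψ)) = (H * (Y * Y)) Ψ := by rw [ContinuousLinearMap.mul_apply, ContinuousLinearMap.mul_apply]
      _ = ((Y * Y) * H) Ψ := by rw [cHYY.eq]
      _ = Y (Y (H Ψ)) := by rw [ContinuousLinearMap.mul_apply, ContinuousLinearMap.mul_apply]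
      _ = (E : ℂ) • (Y (Y Ψ)) := by rw [hE, map_smul, map_smul]
  have hHΦ : H Φ = (E : ℂ) • Φ := by
    rw [hΦval, hP2P2Ψ, map_sub, map_smul, map_smul, hE, hHYY]
    match_scalars <;> ring
  -- second computation of H Φ, via the core identity
  have hstep : H (X (X Ψ)) + H (Y (Y Ψ))
      = (2 : ℂ) • ((Q ^ 2 * H) Ψ) + (2 : ℂ) • (((adjoint Q) ^ 2 * H) Ψ) := by
    calc H (X (X Ψ)) + H (Y (Y Ψ))
        = (H * (X * X)) Ψ + (H * (Y * Y)) Ψ := by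
          rw [ContinuousLinearMap.mul_apply, ContinuousLinearMap.mul_apply, ContinuousLinearMap.mul_apply, ContinuousLinearMap.mul_apply]
      _ = ((X * X) * H) Ψ + ((Y * Y) * H) Ψ := by rw [cHXX.eq, cHYY.eq]
      _ = ((X * X + Y * Y) * H) Ψ := by rw [add_mul, add_apply]
      _ = ((2 : ℂ) • (Q ^ 2 * H) + (2 : ℂ) • ((adjoint Q) ^ 2 * H)) Ψ := by rw [hsum]
      _ = (2 : ℂ) • ((Q ^ 2 * H) Ψ) + (2 : ℂ) • (((adjoint Q) ^ 2 * H) Ψ) := by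
          rw [add_apply, smul_apply, smul_apply]
  have hcoreΨ : X (X (X (X Ψ))) - Y (Y (Y (Y Ψ)))
      = (12 : ℂ) • ((Q ^ 2 * H) Ψ) + (12 : ℂ) • (((adjoint Q) ^ 2 * H) Ψ) := by
    have h := congrArg (fun T : 𝓗 →L[ℂ] 𝓗 => T Ψ) core
    simpa [sub_apply, add_apply, smul_apply, hpow4] using h
  have way2 : H Φ = (72 : ℂ)⁻¹ • (X (X (X (X Ψ))) - Y (Y (Y (Y Ψ)))) := by
    rw [hΦX, map_smul, map_add, hstep, hcoreΨ]
    match_scalars <;> ring_nf <;> norm_num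
  -- the key vector identity:  E•Φ = 2q₁²•Φ + 2•P2(P2 Φ)
  have hP2Φ : P2 (P2 Φ) = (q₁ : ℂ) ^ 2 • (P2 (P2 Ψ)) - P2 (P2 (P2 (P2 Ψ))) := by
    rw [hΦval, map_sub, map_sub, map_smul, map_smul]
  have hfin : (E : ℂ) • Φ = ((2 : ℂ) * (q₁ : ℂ) ^ 2) • Φ + (2 : ℂ) • (P2 (P2 Φ)) := by
    rw [← hHΦ, way2, hX4Ψ, hY4Ψ, hP2Φ, hΦval]
    match_scalars <;> ring
  -- self-adjointness of P2
  have hstarP2 : star P2 = P2 := by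
    rw [hP2def, hYdef, star_smul, star_sub, star_eq_adjoint Q,
      star_eq_adjoint (adjoint Q), adjoint_adjoint]
    rw [show (star ((sC * Complex.I)⁻¹) : ℂ) = -((sC * Complex.I)⁻¹) by
      rw [star_inv₀, star_mul', Complex.star_def, Complex.conj_I, hsCdef,
        Complex.conj_ofReal, ← inv_neg]
      ring_nf]
    rw [neg_smul, smul_sub, smul_sub, neg_sub]
  have hadjP2 : adjoint P2 = P2 := by rw [← star_eq_adjoint]; exact hstarP2
  -- inner products
  have hinner := congrArg (fun v => (inner ℂ Φ v : ℂ)) hfin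
  simp only [inner_add_right, inner_smul_right] at hinner
  have hadjinner : (inner ℂ Φ (P2 (P2 Φ)) : ℂ) = inner ℂ (P2 Φ) (P2 Φ) := by
    rw [← ContinuousLinearMap.adjoint_inner_left P2 (P2 Φ) Φ, hadjP2]
  have hnn : ∀ v : 𝓗, (inner ℂ v v : ℂ) = ((‖v‖ ^ 2 : ℝ) : ℂ) := fun v => by
    rw [inner_self_eq_norm_sq_to_K]; norm_num
  rw [hadjinner, hnn, hnn] at hinner
  have hreal : E * ‖Φ‖ ^ 2 = 2 * q₁ ^ 2 * ‖Φ‖ ^ 2 + 2 * ‖P2 Φ‖ ^ 2 := by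
    rw [show (2 : ℂ) = ((2 : ℝ) : ℂ) by norm_num] at hinner
    exact_mod_cast hinner
  have hΦpos : 0 < ‖Φ‖ := norm_pos_iff.mpr hker
  by_contra hc
  push_neg at hc
  nlinarith [sq_nonneg q₁, sq_nonneg ‖P2 Φ‖, mul_pos hΦpos hΦpos,
    mul_nonneg (sq_nonneg q₁) (sq_nonneg ‖Φ‖)]
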